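/- Let I be a finite index set, X a finite set, m > 0 a real, and for each i ∈ I let κ_i ≥ 1 be a real and X_i ⊆ X, with the sets X_i pairwise disjoint. Let w, T : X → ℝ with w(x) ≥ 0 and T(x) ≥ 0 for all x ∈ X, and n : X → ℝ with n(x) > 0 for all x. If for every i ∈ I we have |X_i| ≤ κ_i and n(x) ≥ m·w(x)·κ_i for all x ∈ X_i, then Σ_{i∈I} Σ_{x∈X_i} √(w(x)·T(x)/n(x)) ≤ √(|I| · (Σ_{x∈X} T(x)) / m). -/

import Mathlib

/-- Cauchy–Schwarz: sum of square roots bounded by sqrt of card times sum. -/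
lemma sum_sqrt_le_sqrt_card_mul {β : Type*} (s : Finset β) (f : β → ℝ)
    (hf : ∀ x ∈ s, 0 ≤ f x) :
    ∑ x ∈ s, Real.sqrt (f x) ≤ Real.sqrt ((s.card : ℝ) * ∑ x ∈ s, f x) := by
  rw [show (∑ x ∈ s, f x) = ∑ x ∈ s, (Real.sqrt (f x))^2 by
    exact Finset.sum_congr rfl fun x hx => (Real.sq_sqrt (hf x hx)).symm]
  have h := sq_sum_le_card_mul_sum_sq (s := s) (f := fun x => Real.sqrt (f x))
  have h0 : (0:ℝ) ≤ ∑ x ∈ s, Real.sqrt (f x) :=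
    Finset.sum_nonneg fun x _ => Real.sqrt_nonneg _
  rw [Real.le_sqrt h0]
  · exact h
  · positivity

/-- Cauchy–Schwarz-type bound on the sum of `√(w(x)T(x)/n(x))` over a knownness partition. -/
theorem sum_sqrt_weight_bound
    {ι α : Type*} (I : Finset ι) (X : Finset α) (m : ℝ) (hm : 0 < m)
    (κ : ι → ℝ) (Xi : ι → Finset α) (w T n : α → ℝ)
    (hκ : ∀ i ∈ I, 1 ≤ κ i)
    (hsub : ∀ i ∈ I, Xi i ⊆ X)
    (hdisj : ∀ i ∈ I, ∀ j ∈ I, i ≠ j → Disjoint (Xi i) (Xi j))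
    (hw : ∀ x ∈ X, 0 ≤ w x)
    (hT : ∀ x ∈ X, 0 ≤ T x)
    (hn : ∀ x ∈ X, 0 < n x)
    (hcard : ∀ i ∈ I, ((Xi i).card : ℝ) ≤ κ i)
    (hnm : ∀ i ∈ I, ∀ x ∈ Xi i, m * w x * κ i ≤ n x) :
    ∑ i ∈ I, ∑ x ∈ Xi i, Real.sqrt (w x * T x / n x) ≤
      Real.sqrt ((I.card : ℝ) * (∑ x ∈ X, T x) / m) := by
  classical
  have key : ∀ i ∈ I, ∑ x ∈ Xi i, Real.sqrt (w x * T x / n x) ≤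
      Real.sqrt ((∑ x ∈ Xi i, T x) / m) := by
    intro i hi
    have hκi := hκ i hi
    have hκpos : 0 < κ i := lt_of_lt_of_le one_pos hκi
    have hmκ : 0 < m * κ i := mul_pos hm hκpos
    have step1 : ∑ x ∈ Xi i, Real.sqrt (w x * T x / n x) ≤
        Real.sqrt ((Xi i).card * ∑ x ∈ Xi i, (w x * T x / n x)) :=
      sum_sqrt_le_sqrt_card_mul _ _ fun x hx =>
        div_nonneg (mul_nonneg (hw x (hsub i hi hx)) (hT x (hsub i hi hx)))
          (hn x (hsub i hi hx)).le
    refine step1.trans (Real.sqrt_le_sqrt ?_)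
    have hterm : ∀ x ∈ Xi i, w x * T x / n x ≤ T x / (m * κ i) := by
      intro x hx
      have hxX := hsub i hi hx
      rw [div_le_div_iff₀ (hn x hxX) hmκ]
      calc w x * T x * (m * κ i) = T x * (m * w x * κ i) := by ring
        _ ≤ T x * n x := mul_le_mul_of_nonneg_left (hnm i hi x hx) (hT x hxX)
    calc ((Xi i).card : ℝ) * ∑ x ∈ Xi i, (w x * T x / n x)
        ≤ κ i * ∑ x ∈ Xi i, (T x / (m * κ i)) := by
          refine mul_le_mul (hcard i hi) (Finset.sum_le_sum hterm) ?_ hκpos.le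
          exact Finset.sum_nonneg fun x hx =>
            div_nonneg (mul_nonneg (hw x (hsub i hi hx)) (hT x (hsub i hi hx)))
              (hn x (hsub i hi hx)).le
      _ = (∑ x ∈ Xi i, T x) / m := by
          rw [← Finset.sum_div]
          field_simp
  have hSsum : ∑ i ∈ I, ∑ x ∈ Xi i, T x ≤ ∑ x ∈ X, T x := by
    rw [← Finset.sum_biUnion (fun i hi j hj hij => hdisj i hi j hj hij)]
    exact Finset.sum_le_sum_of_subset_of_nonneg (Finset.biUnion_subset.2 hsub)
      (fun x hx _ => hT x hx)
  calc ∑ i ∈ I, ∑ x ∈ Xi i, Real.sqrt (w x * T x / n x)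
      ≤ ∑ i ∈ I, Real.sqrt ((∑ x ∈ Xi i, T x) / m) := Finset.sum_le_sum key
    _ ≤ Real.sqrt ((I.card : ℝ) * ∑ i ∈ I, ((∑ x ∈ Xi i, T x) / m)) :=
        sum_sqrt_le_sqrt_card_mul _ _ fun i hi =>
          div_nonneg (Finset.sum_nonneg fun x hx => hT x (hsub i hi hx)) hm.le
    _ ≤ Real.sqrt ((I.card : ℝ) * (∑ x ∈ X, T x) / m) := by
        apply Real.sqrt_le_sqrt
        rw [← Finset.sum_div, mul_div_assoc]
        gcongr
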